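/- Let d ≥ 1, λ > 0, let R and S be real symmetric positive semidefinite d×d matrices, let B : ℝ → Matrix(d,d,ℝ) be such that for every t ≥ 0 and every v ∈ ℝ^d, ⟪v, (B(t) + B(t)ᵀ) v⟫ ≤ -λ‖v‖², and let P : ℝ → Matrix(d,d,ℝ) be differentiable with P(t) symmetric positive semidefinite for all t ≥ 0 and satisfying the Riccati equation P'(t) = B(t)·P(t) + P(t)·B(t)ᵀ + R - P(t)·S·P(t). Then for all t ≥ 0, tr(P(t)) ≤ e^{-λt}·tr(P(0)) + tr(R)/λ. -/

import Mathlib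

open Matrix

lemma psd_trace_nonneg' {d : ℕ} {N : Matrix (Fin d) (Fin d) ℝ} (hN : N.PosSemidef) :
    0 ≤ N.trace := by
  rw [Matrix.trace]
  refine Finset.sum_nonneg fun i _ => ?_
  exact hN.diag_nonneg

open scoped MatrixOrder in
lemma trace_mul_le_of_quadform {d : ℕ} (lam : ℝ) (M A : Matrix (Fin d) (Fin d) ℝ)
    (hA : A.PosSemidef)
    (hM : ∀ v : Fin d → ℝ, v ⬝ᵥ (M *ᵥ v) ≤ -lam * (v ⬝ᵥ v)) :
    (M * A).trace ≤ -lam * A.trace := by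
  set C := CFC.sqrt A with hC
  have hCsymm : ∀ i j, C j i = C i j := by
    intro i j
    have := (CFC.sqrt_nonneg A).posSemidef.1
    have h2 : Cᵀ = C := by simpa [Matrix.IsHermitian] using this
    calc C j i = Cᵀ i j := rfl
      _ = C i j := by rw [h2]
  have hCC : C * C = A := CFC.sqrt_mul_sqrt_self A hA.nonneg
  have h1 : (M * A).trace = (C * M * C).trace := by
    calc (M * A).trace = ((M * C) * C).trace := by rw [← hCC, mul_assoc]
      _ = (C * (M * C)).trace := Matrix.trace_mul_comm _ _
      _ = (C * M * C).trace := by rw [mul_assoc]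
  have h2 : (C * M * C).trace = ∑ i, (C i) ⬝ᵥ (M *ᵥ (C i)) := by
    simp only [Matrix.trace, Matrix.diag, Matrix.mul_apply, dotProduct, Matrix.mulVec,
      dotProduct, Finset.sum_mul, Finset.mul_sum]
    refine Finset.sum_congr rfl fun i _ => ?_
    rw [Finset.sum_comm]
    refine Finset.sum_congr rfl fun k _ => Finset.sum_congr rfl fun j _ => ?_
    rw [hCsymm i j]; ring
  have h3 : A.trace = ∑ i, (C i) ⬝ᵥ (C i) := by
    rw [← hCC]
    simp only [Matrix.trace, Matrix.diag, Matrix.mul_apply, dotProduct]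
    exact Finset.sum_congr rfl fun i _ => Finset.sum_congr rfl fun j _ => by
      rw [hCsymm i j]
  rw [h1, h2, h3, Finset.mul_sum]
  exact Finset.sum_le_sum fun i _ => hM (C i)

/-- Trace bound for the stochastic Riccati equation: if the symmetrized drift matrix
`B t + B tᵀ` has log-norm at most `-λ` and `P` solves the Riccati equation
`P' = B P + P Bᵀ + R - P S P` with `P t`, `R`, `S` symmetric positive semidefinite,
then `tr (P t) ≤ e^{-λ t} tr (P 0) + tr R / λ` for all `t ≥ 0`. -/
theorem stmt_1 (d : ℕ) (hd : 1 ≤ d) (lam : ℝ) (hlam : 0 < lam)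
    (R S : Matrix (Fin d) (Fin d) ℝ) (hR : R.PosSemidef) (hS : S.PosSemidef)
    (B : ℝ → Matrix (Fin d) (Fin d) ℝ)
    (hB : ∀ t : ℝ, 0 ≤ t → ∀ v : Fin d → ℝ,
      v ⬝ᵥ ((B t + (B t)ᵀ) *ᵥ v) ≤ -lam * (v ⬝ᵥ v))
    (P : ℝ → Matrix (Fin d) (Fin d) ℝ)
    (hP : ∀ t : ℝ, 0 ≤ t → (P t).PosSemidef)
    (hP' : ∀ t : ℝ, 0 ≤ t → ∀ i j : Fin d,
      HasDerivAt (fun s => P s i j)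
        ((B t * P t + P t * (B t)ᵀ + R - P t * S * P t) i j) t) :
    ∀ t : ℝ, 0 ≤ t →
      (P t).trace ≤ Real.exp (-lam * t) * (P 0).trace + R.trace / lam := by
  set c : ℝ := R.trace / lam with hc
  have hRtr : 0 ≤ R.trace := psd_trace_nonneg' hR
  have hcnn : 0 ≤ c := div_nonneg hRtr hlam.le
  -- derivative of trace
  set D : ℝ → ℝ := fun t => (B t * P t + P t * (B t)ᵀ + R - P t * S * P t).trace with hD
  have hf : ∀ t : ℝ, 0 ≤ t → HasDerivAt (fun s => (P s).trace) (D t) t := by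
    intro t ht
    have : HasDerivAt (fun s => ∑ i, P s i i)
        (∑ i, (B t * P t + P t * (B t)ᵀ + R - P t * S * P t) i i) t :=
      HasDerivAt.fun_sum fun i _ => hP' t ht i i
    simpa only [hD, Matrix.trace, Matrix.diag] using this
  -- bound on the derivative
  have hDle : ∀ t : ℝ, 0 ≤ t → D t ≤ -lam * (P t).trace + R.trace := by
    intro t ht
    have h1 : ((B t + (B t)ᵀ) * P t).trace ≤ -lam * (P t).trace :=
      trace_mul_le_of_quadform lam _ _ (hP t ht) (hB t ht)
    have h2 : (0:ℝ) ≤ (P t * S * P t).trace := by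
      have hpsd := hS.conjTranspose_mul_mul_same (P t)
      rw [(hP t ht).1] at hpsd
      exact psd_trace_nonneg' hpsd
    have h3 : (P t * (B t)ᵀ).trace = ((B t)ᵀ * P t).trace := Matrix.trace_mul_comm _ _
    have : D t = ((B t + (B t)ᵀ) * P t).trace + R.trace - (P t * S * P t).trace := by
      simp [hD, Matrix.trace_sub, Matrix.trace_add, Matrix.add_mul, h3]
    rw [this]
    linarith
  -- Gronwall via monotonicity of g
  set g : ℝ → ℝ := fun t => Real.exp (lam * t) * ((P t).trace - c) with hg
  have hg' : ∀ t : ℝ, 0 ≤ t →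
      HasDerivAt g (Real.exp (lam * t) * (lam * ((P t).trace - c) + D t)) t := by
    intro t ht
    have he : HasDerivAt (fun s : ℝ => Real.exp (lam * s)) (lam * Real.exp (lam * t)) t := by
      simpa [mul_comm] using ((hasDerivAt_id t).const_mul lam).exp
    have := he.fun_mul ((hf t ht).sub_const c)
    convert this using 1
    · rfl
    · rfl
    · ring
  have hgmono : AntitoneOn g (Set.Ici (0:ℝ)) := by
    have hcont : ContinuousOn g (Set.Ici 0) := fun t ht => ((hg' t ht).continuousAt).continuousWithinAt
    refine antitoneOn_of_deriv_nonpos (convex_Ici 0) hcont ?_ ?_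
    · intro t ht
      rw [interior_Ici] at ht
      exact ((hg' t (le_of_lt ht)).differentiableAt).differentiableWithinAt
    · intro t ht
      rw [interior_Ici] at ht
      rw [(hg' t ht.le).deriv]
      have hDt := hDle t ht.le
      have : lam * ((P t).trace - c) + D t ≤ 0 := by
        have : lam * c = R.trace := by
          rw [hc]; field_simp
        nlinarith
      exact mul_nonpos_of_nonneg_of_nonpos (Real.exp_nonneg _) this
  intro t ht
  have := hgmono (Set.self_mem_Ici) (Set.mem_Ici.mpr ht) ht
  simp only [hg, mul_zero, Real.exp_zero, one_mul] at this
  -- g t ≤ g 0 : exp(lam t) ((P t).trace - c) ≤ (P 0).trace - c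
  have hexp : 0 < Real.exp (lam * t) := Real.exp_pos _
  have key : (P t).trace - c ≤ Real.exp (-lam * t) * ((P 0).trace - c) := by
    rw [neg_mul, Real.exp_neg, ← div_eq_inv_mul, le_div_iff₀ hexp, mul_comm]
    exact this
  have h4 : Real.exp (-lam * t) * c ≤ c :=
    calc Real.exp (-lam * t) * c ≤ 1 * c := by
          apply mul_le_mul_of_nonneg_right _ hcnn
          exact Real.exp_le_one_iff.mpr (by nlinarith)
      _ = c := one_mul c
  have h5 : 0 ≤ Real.exp (-lam * t) * c := mul_nonneg (Real.exp_nonneg _) hcnn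
  rw [mul_sub] at key
  linarith [key, h5]
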